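/- Let 𝔡 be a finite-dimensional Lie algebra with invariant β ∈ S²𝔡 and 𝔤 ⊆ 𝔡 a β-coisotropic Lie subalgebra. Let 𝔮 = 𝔠/𝔠^⊥ with 𝔠 = 𝔤 ⋉ 𝔡*_β ⊆ 𝔡 ⋉ 𝔡*_β, and let f : 𝔮 → 𝔡 be the map induced by f̂(ξ, μ) = ξ + β^♯(μ) (which descends since 𝔠^⊥ ⊆ ker f̂). Then f is a Lie algebra homomorphism satisfying f(ξ) = ξ for ξ ∈ 𝔤 (under the embedding 𝔤 ↪ 𝔮) and β^♯ = f ∘ f*, where f* : 𝔡* → 𝔮 is the dual map via the identification 𝔮* ≅ 𝔮 given by the induced metric on 𝔮. -/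
import Mathlib


open Module LieAlgebra

/-- `x` lies in the β̂-orthogonal `𝔠^⊥` of `𝔠 = 𝔤 ⋉ 𝔡*_β = {y | y.1 ∈ G}`. -/
def InCperp {K D : Type*} [Field K] [AddCommGroup D] [Module K D]
    (G : Submodule K D)
    (hatβ : (D × Module.Dual K D) → (D × Module.Dual K D) → K)
    (x : D × Module.Dual K D) : Prop :=
  ∀ y : D × Module.Dual K D, y.1 ∈ G → hatβ x y = 0

/-- The map `f : 𝔮 = 𝔠/𝔠^⊥ → 𝔡` induced by `f̂(ξ,μ) = ξ + β^♯(μ)` is well defined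
(`𝔠^⊥ ⊆ ker f̂`), a Lie algebra homomorphism, restricts to the identity on `𝔤`, and
satisfies `β^♯ = f ∘ f*`, where `f* : 𝔡* → 𝔮` is the dual map via the metric
identification `𝔮* ≅ 𝔮`: for every `μ` there is a representative `x ∈ 𝔠` of `f*(μ)`
(characterized by `β̂(x, y) = μ(f̂(y))` for all `y ∈ 𝔠`) with `f̂(x) = β^♯(μ)`. -/
theorem reduced_homomorphism {K D : Type*} [Field K]
    [LieRing D] [LieAlgebra K D] [FiniteDimensional K D]
    (Bs : Module.Dual K D →ₗ[K] D)
    (hsymm : ∀ μ ν : Module.Dual K D, μ (Bs ν) = ν (Bs μ))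
    (hinv : ∀ (ξ : D) (μ : Module.Dual K D),
      Bs (μ ∘ₗ LieAlgebra.ad K D ξ) = -⁅ξ, Bs μ⁆)
    (br : Module.Dual K D → Module.Dual K D → Module.Dual K D)
    (hbr : ∀ (μ₁ μ₂ : Module.Dual K D) (ξ : D), br μ₁ μ₂ ξ = μ₂ ⁅ξ, Bs μ₁⁆)
    (Br : (D × Module.Dual K D) → (D × Module.Dual K D) → (D × Module.Dual K D))
    (hBr : ∀ x y : D × Module.Dual K D,
      Br x y = (⁅x.1, y.1⁆,
        -(y.2 ∘ₗ LieAlgebra.ad K D x.1) + (x.2 ∘ₗ LieAlgebra.ad K D y.1)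
          + br x.2 y.2))
    (hatβ : (D × Module.Dual K D) → (D × Module.Dual K D) → K)
    (hβ : ∀ x y : D × Module.Dual K D,
      hatβ x y = x.2 (Bs y.2) + x.2 y.1 + y.2 x.1)
    (G : Submodule K D)
    (hG : ∀ x ∈ G, ∀ y ∈ G, ⁅x, y⁆ ∈ G)
    (hco : ∀ μ ν : Module.Dual K D,
      μ ∈ G.dualAnnihilator → ν ∈ G.dualAnnihilator → μ (Bs ν) = 0)
    (fhat : (D × Module.Dual K D) → D)
    (hfhat : ∀ x, fhat x = x.1 + Bs x.2) :
    -- f̂ vanishes on 𝔠^⊥, so f descends to the quotient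
    (∀ x : D × Module.Dual K D, InCperp G hatβ x → fhat x = 0) ∧
    -- f is a Lie algebra homomorphism
    (∀ x y : D × Module.Dual K D, fhat (Br x y) = ⁅fhat x, fhat y⁆) ∧
    -- f restricts to the identity on 𝔤 (embedded as ξ ↦ [(ξ,0)])
    (∀ ξ : D, fhat (ξ, (0 : Module.Dual K D)) = ξ) ∧
    -- β^♯ = f ∘ f*
    (∀ μ : Module.Dual K D, ∃ x : D × Module.Dual K D,
      x.1 ∈ G ∧ (∀ y : D × Module.Dual K D, y.1 ∈ G → hatβ x y = μ (fhat y)) ∧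
      fhat x = Bs μ) := by
  refine ⟨?_, ?_, ?_, ?_⟩
  · intro x hx
    have h2 : x.2 ∈ G.dualAnnihilator := by
      rw [Submodule.mem_dualAnnihilator]
      intro g hg
      have := hx (g, 0) hg
      simpa [hβ] using this
    have h1 : ∀ ν : Module.Dual K D, ν (x.1 + Bs x.2) = 0 := by
      intro ν
      have h0 := hx (0, ν) (Submodule.zero_mem G)
      rw [hβ] at h0
      simp only [map_zero, add_zero] at h0
      rw [map_add, ← hsymm x.2 ν]
      linear_combination h0
    rw [hfhat]
    exact (Module.forall_dual_apply_eq_zero_iff K _).mp h1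
  · intro x y
    have hbr' : br x.2 y.2 = -(y.2 ∘ₗ LieAlgebra.ad K D (Bs x.2)) := by
      ext ξ
      simp only [hbr, LinearMap.neg_apply, LinearMap.coe_comp, Function.comp_apply,
        LieAlgebra.ad_apply]
      rw [← lie_skew ξ (Bs x.2), map_neg]
    rw [hfhat, hfhat, hfhat, hBr]
    simp only [map_add, hbr', map_neg, hinv, neg_neg]
    simp only [lie_add, add_lie]
    rw [← lie_skew (Bs x.2) y.1]
    abel
  · intro ξ; simp [hfhat]
  · intro μ
    refine ⟨(0, μ), Submodule.zero_mem G, ?_, by simp [hfhat]⟩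
    intro y hy
    rw [hβ, hfhat]
    simp [hsymm μ y.2]
    ring
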